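/- Let W, Z_1, …, Z_m be mutually independent exponential random variables with rate 1, let g > 0, let c_1, …, c_m be nonnegative reals, and let x ≥ 0. Then P( g·W/(1 + ∑_{j=1}^m c_j Z_j) ≤ x ) = 1 − e^{−x/g} · ∏_{j=1}^m (1 + c_j x/g)^{−1}. -/

import Mathlib

open MeasureTheory ProbabilityTheory
open scoped ENNReal NNReal

lemma expMeasure_Iic_eq (t : ℝ) :
    expMeasure 1 (Set.Iic t)
      = ENNReal.ofReal (if 0 ≤ t then 1 - Real.exp (-t) else 0) := by
  rw [expMeasure, gammaMeasure, withDensity_apply _ measurableSet_Iic]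
  have h := lintegral_exponentialPDF_eq_antiDeriv (r := 1) one_pos t
  simpa [exponentialPDF, exponentialPDFReal, gammaPDF] using h

lemma expMeasure_Iio_zero : expMeasure 1 (Set.Iio 0) = 0 := by
  rw [expMeasure, gammaMeasure, withDensity_apply _ measurableSet_Iio]
  exact lintegral_gammaPDF_of_nonpos le_rfl

lemma expMeasure_laplace {a : ℝ} (ha : 0 ≤ a) :
    ∫⁻ z, ENNReal.ofReal (Real.exp (-(a * z))) ∂(expMeasure 1)
      = ENNReal.ofReal (1 + a)⁻¹ := by
  have h1a : (0 : ℝ) < 1 + a := by linarith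
  have hmeas : Measurable fun z : ℝ => ENNReal.ofReal (Real.exp (-(a * z))) := by
    fun_prop
  have hgm : Measurable (gammaPDF 1 1) := (measurable_gammaPDFReal 1 1).ennreal_ofReal
  rw [expMeasure, gammaMeasure, lintegral_withDensity_eq_lintegral_mul _ hgm hmeas]
  have hpt : ∀ z : ℝ, (gammaPDF 1 1 * fun z => ENNReal.ofReal (Real.exp (-(a * z)))) z
      = ENNReal.ofReal (1 + a)⁻¹ * exponentialPDF (1 + a) z := by
    intro z
    have hgp : gammaPDF 1 1 z = exponentialPDF 1 z := rfl
    simp only [Pi.mul_apply, hgp, exponentialPDF_eq]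
    split_ifs with h
    · rw [← ENNReal.ofReal_mul (by positivity), ← ENNReal.ofReal_mul (by positivity)]
      congr 1
      rw [one_mul, ← Real.exp_add, inv_mul_cancel_left₀ h1a.ne']
      congr 1
      ring
    · simp
  calc ∫⁻ z, (gammaPDF 1 1 * fun z => ENNReal.ofReal (Real.exp (-(a * z)))) z
      = ∫⁻ z, ENNReal.ofReal (1 + a)⁻¹ * exponentialPDF (1 + a) z := by
        exact lintegral_congr hpt
    _ = ENNReal.ofReal (1 + a)⁻¹ * ∫⁻ z, exponentialPDF (1 + a) z :=
        lintegral_const_mul _ ((measurable_exponentialPDFReal _).ennreal_ofReal)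
    _ = ENNReal.ofReal (1 + a)⁻¹ := by
        rw [lintegral_exponentialPDF_eq_one h1a, mul_one]

lemma lintegral_prod_of_iIndepFun {Ω : Type*} [MeasurableSpace Ω] {P : Measure Ω}
    {ι : Type*} {f : ι → Ω → ℝ}
    (hindep : iIndepFun f P)
    (hmeas : ∀ i, Measurable (f i)) (φ : ι → ℝ → ℝ≥0∞) (hφ : ∀ i, Measurable (φ i))
    (s : Finset ι) :
    ∫⁻ ω, ∏ i ∈ s, φ i (f i ω) ∂P = ∏ i ∈ s, ∫⁻ ω, φ i (f i ω) ∂P := by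
  classical
  have : IsProbabilityMeasure P := hindep.isProbabilityMeasure
  induction s using Finset.induction with
  | empty => simp
  | @insert a s ha ih =>
      have hdisj : Disjoint ({a} : Finset ι) s := Finset.disjoint_singleton_left.mpr ha
      have hbase := hindep.indepFun_finset {a} s hdisj hmeas
      have hF : Measurable fun v : { i // i ∈ ({a} : Finset ι) } → ℝ =>
          φ a (v ⟨a, Finset.mem_singleton_self a⟩) :=
        (hφ a).comp (measurable_pi_apply _)
      have hG : Measurable fun v : { i // i ∈ s } → ℝ => ∏ i : s, φ i (v i) :=
        Finset.measurable_prod _ fun i _ => (hφ i).comp (measurable_pi_apply i)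
      have hI : IndepFun (fun ω => φ a (f a ω)) (fun ω => ∏ i ∈ s, φ i (f i ω)) P := by
        have h := hbase.comp hF hG
        have h1 : ((fun v : { i // i ∈ ({a} : Finset ι) } → ℝ =>
            φ a (v ⟨a, Finset.mem_singleton_self a⟩)) ∘ fun ω (i : { i // i ∈ ({a} : Finset ι) }) => f i ω)
            = fun ω => φ a (f a ω) := rfl
        have h2 : ((fun v : { i // i ∈ s } → ℝ => ∏ i : s, φ i (v i)) ∘
            fun ω (i : { i // i ∈ s }) => f i ω)
            = fun ω => ∏ i ∈ s, φ i (f i ω) := by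
          funext ω
          simp only [Function.comp_apply]
          exact Finset.prod_coe_sort s fun i => φ i (f i ω)
        rwa [h1, h2] at h
      have hml : Measurable fun ω => φ a (f a ω) := (hφ a).comp (hmeas a)
      have hmr : Measurable fun ω => ∏ i ∈ s, φ i (f i ω) :=
        Finset.measurable_prod _ fun i _ => (hφ i).comp (hmeas i)
      calc ∫⁻ ω, ∏ i ∈ insert a s, φ i (f i ω) ∂P
          = ∫⁻ ω, φ a (f a ω) * ∏ i ∈ s, φ i (f i ω) ∂P := by
            refine lintegral_congr fun ω => ?_
            rw [Finset.prod_insert ha]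
        _ = (∫⁻ ω, φ a (f a ω) ∂P) * ∫⁻ ω, ∏ i ∈ s, φ i (f i ω) ∂P :=
            lintegral_mul_eq_lintegral_mul_lintegral_of_indepFun''
              hml.aemeasurable hmr.aemeasurable hI
        _ = ∏ i ∈ insert a s, ∫⁻ ω, φ i (f i ω) ∂P := by
            rw [ih, Finset.prod_insert ha]

/-- If `W, Z 0, …, Z (m-1)` are mutually independent exponential
(rate 1) random variables, `g > 0`, `c j ≥ 0`, and `x ≥ 0`, then
`P(g·W/(1 + ∑ⱼ cⱼ Zⱼ) ≤ x) = 1 - e^{-x/g} ∏ⱼ (1 + cⱼ x/g)⁻¹`. -/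
theorem stmt11
    {Ω : Type*} [MeasurableSpace Ω] (P : Measure Ω) [IsProbabilityMeasure P]
    (m : ℕ) (W : Ω → ℝ) (Z : Fin m → Ω → ℝ)
    (hWmeas : Measurable W) (hZmeas : ∀ j, Measurable (Z j))
    (hindep : iIndepFun (Fin.cons W Z : Fin (m + 1) → Ω → ℝ) P)
    (hW : Measure.map W P = expMeasure 1)
    (hZ : ∀ j, Measure.map (Z j) P = expMeasure 1)
    (g : ℝ) (hg : 0 < g) (c : Fin m → ℝ) (hc : ∀ j, 0 ≤ c j)
    (x : ℝ) (hx : 0 ≤ x) :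
    P {ω | g * W ω / (1 + ∑ j, c j * Z j ω) ≤ x}
      = ENNReal.ofReal (1 - Real.exp (-x / g) * ∏ j, (1 + c j * x / g)⁻¹) := by
  classical
  set S : Ω → ℝ := fun ω => ∑ j, c j * Z j ω with hSdef
  have hSmeas : Measurable S :=
    Finset.measurable_sum _ fun j _ => (hZmeas j).const_mul (c j)
  have hfmeas : ∀ i, Measurable ((Fin.cons W Z : Fin (m + 1) → Ω → ℝ) i) :=
    Fin.cases hWmeas hZmeas
  -- a.e. nonnegativity of the Z's
  have hZ0 : ∀ j, ∀ᵐ ω ∂P, 0 ≤ Z j ω := by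
    intro j
    have h0 : P (Z j ⁻¹' Set.Iio 0) = 0 := by
      rw [← Measure.map_apply (hZmeas j) measurableSet_Iio, hZ j, expMeasure_Iio_zero]
    have hset : {ω | ¬ (0:ℝ) ≤ Z j ω} = Z j ⁻¹' Set.Iio 0 := by
      ext ω; simp [not_le]
    rw [ae_iff, hset]
    exact h0
  have hS0 : ∀ᵐ ω ∂P, 0 ≤ S ω := by
    filter_upwards [ae_all_iff.mpr hZ0] with ω hω
    exact Finset.sum_nonneg fun j _ => mul_nonneg (hc j) (hω j)
  -- rewrite the event
  have hAB : P {ω | g * W ω / (1 + S ω) ≤ x} = P {ω | W ω ≤ x * (1 + S ω) / g} := by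
    refine measure_congr ?_
    rw [Filter.eventuallyEq_set]
    filter_upwards [hS0] with ω hω
    have h1 : (0 : ℝ) < 1 + S ω := by linarith
    show g * W ω / (1 + S ω) ≤ x ↔ W ω ≤ x * (1 + S ω) / g
    rw [div_le_iff₀ h1, le_div_iff₀ hg, mul_comm]
  -- independence of W and S
  have hWS : IndepFun W S P := by
    have hdisj : Disjoint ({0} : Finset (Fin (m + 1))) (Finset.univ.image Fin.succ) := by
      simp only [Finset.disjoint_left, Finset.mem_singleton, Finset.mem_image]
      rintro a rfl ⟨j, -, hj⟩
      exact Fin.succ_ne_zero j hj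
    have hbase := hindep.indepFun_finset {0} (Finset.univ.image Fin.succ) hdisj hfmeas
    have hF : Measurable fun v : { i // i ∈ ({0} : Finset (Fin (m + 1))) } → ℝ =>
        v ⟨0, Finset.mem_singleton_self 0⟩ := measurable_pi_apply _
    have hG : Measurable fun v : { i // i ∈ Finset.univ.image (Fin.succ (n := m)) } → ℝ =>
        ∑ j : Fin m, c j * v ⟨j.succ, Finset.mem_image_of_mem _ (Finset.mem_univ j)⟩ :=
      Finset.measurable_sum _ fun j _ => by fun_prop
    have h := hbase.comp hF hG
    have h1 : ((fun v : { i // i ∈ ({0} : Finset (Fin (m + 1))) } → ℝ =>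
        v ⟨0, Finset.mem_singleton_self 0⟩) ∘
        fun ω (i : { i // i ∈ ({0} : Finset (Fin (m + 1))) }) => (Fin.cons W Z : Fin (m+1) → Ω → ℝ) i ω)
        = W := by
      funext ω; simp [Fin.cons_zero]
    have h2 : ((fun v : { i // i ∈ Finset.univ.image (Fin.succ (n := m)) } → ℝ =>
        ∑ j : Fin m, c j * v ⟨j.succ, Finset.mem_image_of_mem _ (Finset.mem_univ j)⟩) ∘
        fun ω (i : { i // i ∈ Finset.univ.image (Fin.succ (n := m)) }) =>
          (Fin.cons W Z : Fin (m+1) → Ω → ℝ) i ω) = S := by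
      funext ω; simp [S, Fin.cons_succ]
    rwa [h1, h2] at h
  -- law of the pair (S, W)
  have hmap : Measure.map (fun ω => (S ω, W ω)) P
      = (Measure.map S P).prod (Measure.map W P) :=
    (indepFun_iff_map_prod_eq_prod_map_map hSmeas.aemeasurable hWmeas.aemeasurable).mp hWS.symm
  have hE : MeasurableSet {p : ℝ × ℝ | p.2 ≤ x * (1 + p.1) / g} :=
    measurableSet_le measurable_snd (by fun_prop)
  have key : P {ω | W ω ≤ x * (1 + S ω) / g}
      = ∫⁻ s, expMeasure 1 (Set.Iic (x * (1 + s) / g)) ∂(Measure.map S P) := by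
    have hpre : {ω | W ω ≤ x * (1 + S ω) / g}
        = (fun ω => (S ω, W ω)) ⁻¹' {p : ℝ × ℝ | p.2 ≤ x * (1 + p.1) / g} := rfl
    rw [hpre, ← Measure.map_apply (hSmeas.prodMk hWmeas) hE, hmap, Measure.prod_apply hE]
    simp only [hW]
    rfl
  have : IsProbabilityMeasure (Measure.map S P) :=
    Measure.isProbabilityMeasure_map hSmeas.aemeasurable
  have hν0 : ∀ᵐ s ∂(Measure.map S P), 0 ≤ s := by
    have := (MeasureTheory.ae_map_iff hSmeas.aemeasurable
      (measurableSet_Ici : MeasurableSet (Set.Ici (0 : ℝ)))).mpr (hS0.mono fun ω h => h)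
    filter_upwards [this] with s hs using hs
  -- CDF step
  have step1 : ∫⁻ s, expMeasure 1 (Set.Iic (x * (1 + s) / g)) ∂(Measure.map S P)
      = ∫⁻ s, (1 - ENNReal.ofReal (Real.exp (-(x * (1 + s) / g)))) ∂(Measure.map S P) := by
    refine lintegral_congr_ae ?_
    filter_upwards [hν0] with s hs
    have hnn : 0 ≤ x * (1 + s) / g := div_nonneg (mul_nonneg hx (by linarith)) hg.le
    rw [expMeasure_Iic_eq, if_pos hnn, ENNReal.ofReal_sub _ (Real.exp_pos _).le,
      ENNReal.ofReal_one]
  have hmeash : Measurable fun s : ℝ => ENNReal.ofReal (Real.exp (-(x * (1 + s) / g))) := by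
    fun_prop
  have hle : (fun s : ℝ => ENNReal.ofReal (Real.exp (-(x * (1 + s) / g))))
      ≤ᵐ[Measure.map S P] fun _ => 1 := by
    filter_upwards [hν0] with s hs
    have hnn : 0 ≤ x * (1 + s) / g := div_nonneg (mul_nonneg hx (by linarith)) hg.le
    simpa [ENNReal.ofReal_le_one, Real.exp_le_one_iff] using neg_nonpos.mpr hnn
  have hfin : ∫⁻ s, ENNReal.ofReal (Real.exp (-(x * (1 + s) / g))) ∂(Measure.map S P) ≠ ⊤ := by
    refine ne_top_of_le_ne_top ?_ (lintegral_mono_ae hle)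
    simp
  have step2 : ∫⁻ s, (1 - ENNReal.ofReal (Real.exp (-(x * (1 + s) / g)))) ∂(Measure.map S P)
      = 1 - ∫⁻ s, ENNReal.ofReal (Real.exp (-(x * (1 + s) / g))) ∂(Measure.map S P) := by
    rw [lintegral_sub hmeash hfin hle, lintegral_one, measure_univ]
  -- Laplace transform computation
  have step3 : ∫⁻ s, ENNReal.ofReal (Real.exp (-(x * (1 + s) / g))) ∂(Measure.map S P)
      = ENNReal.ofReal (Real.exp (-(x / g)))
        * ∏ j, ENNReal.ofReal (1 + x / g * c j)⁻¹ := by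
    have hsplit : ∀ s : ℝ, ENNReal.ofReal (Real.exp (-(x * (1 + s) / g)))
        = ENNReal.ofReal (Real.exp (-(x / g)))
          * ENNReal.ofReal (Real.exp (-(x / g * s))) := by
      intro s
      rw [← ENNReal.ofReal_mul (Real.exp_pos _).le, ← Real.exp_add]
      congr 2
      ring
    rw [lintegral_congr hsplit,
      lintegral_const_mul _ (by fun_prop : Measurable fun s : ℝ =>
        ENNReal.ofReal (Real.exp (-(x / g * s))))]
    congr 1
    rw [lintegral_map (by fun_prop) hSmeas]
    -- expand into a product over j
    set φ : Fin (m + 1) → ℝ → ℝ≥0∞ :=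
      Fin.cons (fun _ => 1) (fun j z => ENNReal.ofReal (Real.exp (-(x / g * (c j * z)))))
      with hφdef
    have hφ : ∀ i, Measurable (φ i) := by
      refine Fin.cases ?_ ?_
      · simp only [hφdef, Fin.cons_zero]; exact measurable_const
      · intro j; simp only [hφdef, Fin.cons_succ]; fun_prop
    have hexp : ∀ ω, ENNReal.ofReal (Real.exp (-(x / g * S ω)))
        = ∏ i ∈ Finset.univ.image Fin.succ,
            φ i ((Fin.cons W Z : Fin (m+1) → Ω → ℝ) i ω) := by
      intro ω
      rw [Finset.prod_image (fun a _ b _ h => Fin.succ_injective m h)]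
      simp only [hφdef, Fin.cons_succ]
      rw [← ENNReal.ofReal_prod_of_nonneg (fun j _ => (Real.exp_pos _).le), ← Real.exp_sum]
      congr 2
      rw [hSdef, Finset.mul_sum, ← Finset.sum_neg_distrib]
    calc ∫⁻ ω, ENNReal.ofReal (Real.exp (-(x / g * S ω))) ∂P
        = ∫⁻ ω, ∏ i ∈ Finset.univ.image Fin.succ,
            φ i ((Fin.cons W Z : Fin (m+1) → Ω → ℝ) i ω) ∂P := lintegral_congr hexp
      _ = ∏ i ∈ Finset.univ.image Fin.succ,
            ∫⁻ ω, φ i ((Fin.cons W Z : Fin (m+1) → Ω → ℝ) i ω) ∂P :=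
          lintegral_prod_of_iIndepFun hindep hfmeas φ hφ _
      _ = ∏ j, ENNReal.ofReal (1 + x / g * c j)⁻¹ := by
          rw [Finset.prod_image (fun a _ b _ h => Fin.succ_injective m h)]
          refine Finset.prod_congr rfl fun j _ => ?_
          simp only [hφdef, Fin.cons_succ]
          have : ∫⁻ ω, ENNReal.ofReal (Real.exp (-(x / g * (c j * Z j ω)))) ∂P
              = ∫⁻ z, ENNReal.ofReal (Real.exp (-(x / g * c j * z))) ∂(expMeasure 1) := by
            rw [← hZ j, lintegral_map (by fun_prop) (hZmeas j)]
            refine lintegral_congr fun ω => ?_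
            congr 2
            ring
          rw [this, expMeasure_laplace (mul_nonneg (div_nonneg hx hg.le) (hc j))]
  -- assemble
  rw [hAB, key, step1, step2, step3]
  have hprod_nn : 0 ≤ ∏ j, (1 + x / g * c j)⁻¹ :=
    Finset.prod_nonneg fun j _ => inv_nonneg.mpr
      (by have := mul_nonneg (div_nonneg hx hg.le) (hc j); linarith)
  rw [← ENNReal.ofReal_prod_of_nonneg (fun j _ => inv_nonneg.mpr
      (by have := mul_nonneg (div_nonneg hx hg.le) (hc j); linarith)),
    ← ENNReal.ofReal_mul (Real.exp_pos _).le,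
    ← ENNReal.ofReal_one, ← ENNReal.ofReal_sub _
      (mul_nonneg (Real.exp_pos _).le hprod_nn)]
  have harg : Real.exp (-x / g) * ∏ j, (1 + c j * x / g)⁻¹
      = Real.exp (-(x / g)) * ∏ j, (1 + x / g * c j)⁻¹ := by
    rw [neg_div]
    congr 1
    refine Finset.prod_congr rfl fun j _ => ?_
    congr 1
    ring
  rw [harg]
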